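/- arXiv:0911.0630 — 2 statements merged into one kernel-verified Lean document; each statement's English description precedes it below -/
import Mathlib

section
/- Let S be a commutative semiring with idempotent addition (1 + 1 = 1), let X be a finite set, and let r be a partial order on X. Then r is observationally equivalent to the sum of all total orders on X extending r: for every partial order s on X, ⟨r, s⟩ = Σ_{t total, r ⊆ t} ⟨t, s⟩, where ⟨p,q⟩ = 1 if p and q are compatible and 0 otherwise. -/
/-- Two relations are compatible when the transitive closure of their union is
antisymmetric (i.e. the union is acyclic). -/
def Compatible {X : Type*} (r s : X → X → Prop) : Prop :=
  ∀ a b : X, Relation.TransGen (fun u v => r u v ∨ s u v) a b →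
    Relation.TransGen (fun u v => r u v ∨ s u v) b a → a = b

open Classical in
/-- The compatibility pairing with values in a commutative semiring. -/
noncomputable def bracket {X : Type*} (S : Type*) [CommSemiring S]
    (r s : X → X → Prop) : S :=
  if Compatible r s then 1 else 0

/-! By Szpilrajn's extension theorem, `r` is compatible with `s` iff some linear extension of
`r` is; and in an idempotent semiring a sum of `0`s and `1`s is `1` iff some summand is. -/

section IdempotentSum

variable {S : Type*} [CommSemiring S]

lemma natCast_eq_one_of_add_self (hidem : (1 : S) + 1 = 1) :
    ∀ {n : ℕ}, n ≠ 0 → (n : S) = 1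
  | 1, _ => Nat.cast_one
  | n + 2, _ => by
    rw [Nat.cast_succ, natCast_eq_one_of_add_self hidem n.succ_ne_zero, hidem]

open Classical in
lemma sum_boole_eq_ite_exists (hidem : (1 : S) + 1 = 1) {ι : Type*} (A : Finset ι)
    (P : ι → Prop) :
    (∑ i ∈ A, if P i then (1 : S) else 0) = if ∃ i ∈ A, P i then 1 else 0 := by
  rw [Finset.sum_boole]
  split_ifs with h
  · exact natCast_eq_one_of_add_self hidem
      (Finset.card_ne_zero.2 (Finset.filter_nonempty_iff.2 h))
  · rw [Finset.filter_false_of_mem (fun i hi hP => h ⟨i, hi, hP⟩), Finset.card_empty, Nat.cast_zero]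

end IdempotentSum

section Compatible

variable {X : Type*} {r r' s : X → X → Prop}

lemma Compatible.mono_left (hc : Compatible r' s) (h : r ≤ r') : Compatible r s :=
  fun a b hab hba =>
    hc a b (Relation.TransGen.mono (fun _ _ => Or.imp_left (h _ _)) _ _ hab)
      (Relation.TransGen.mono (fun _ _ => Or.imp_left (h _ _)) _ _ hba)

lemma compatible_of_le (hr : IsPartialOrder X r) (hs : s ≤ r) : Compatible r s := by
  have hclosed : ∀ a b, Relation.TransGen (fun u v => r u v ∨ s u v) a b → r a b := by
    intro a b h
    induction h with
    | single h => exact h.elim id (hs _ _)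
    | tail _ h ih => exact hr.trans _ _ _ ih (h.elim id (hs _ _))
  exact fun a b hab hba => hr.antisymm _ _ (hclosed _ _ hab) (hclosed _ _ hba)

/-- The reflexive-transitive closure of `r ∪ s` is a partial order, and any linear extension
of it does the job. -/
lemma Compatible.exists_isLinearOrder (hc : Compatible r s) :
    ∃ u, IsLinearOrder X u ∧ r ≤ u ∧ Compatible u s := by
  let p := Relation.ReflTransGen fun u v => r u v ∨ s u v
  have hp : IsPartialOrder X p :=
    { refl := fun _ => .refl
      trans := fun _ _ _ => .trans
      antisymm := fun a b hab hba => by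
        rcases Relation.reflTransGen_iff_eq_or_transGen.1 hab with h | hab
        · exact h.symm
        rcases Relation.reflTransGen_iff_eq_or_transGen.1 hba with h | hba
        · exact h
        exact hc a b hab hba }
  obtain ⟨u, hu, hpu⟩ := extend_partialOrder p
  have hu_le : ∀ {q : X → X → Prop}, (∀ a b, q a b → r a b ∨ s a b) → q ≤ u :=
    fun hq a b h => hpu a b (.single (hq a b h))
  exact ⟨u, hu, hu_le fun _ _ => Or.inl,
    compatible_of_le hu.toIsPartialOrder (hu_le fun _ _ => Or.inr)⟩

lemma compatible_iff_exists_isLinearOrder :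
    Compatible r s ↔ ∃ u, IsLinearOrder X u ∧ r ≤ u ∧ Compatible u s :=
  ⟨Compatible.exists_isLinearOrder, fun ⟨_, _, hru, hc⟩ => hc.mono_left hru⟩

end Compatible

theorem stmt12_general {X : Type*} {S : Type*} [CommSemiring S]
    (hidem : (1 : S) + 1 = 1)
    (r : X → X → Prop)
    {ι : Type*} [Fintype ι] (t : ι → (X → X → Prop))
    (hext : ∀ i, IsLinearOrder X (t i) ∧ ∀ a b : X, r a b → t i a b)
    (hall : ∀ u : X → X → Prop, IsLinearOrder X u → (∀ a b : X, r a b → u a b) →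
      ∃ i, u = t i)
    (s : X → X → Prop) :
    bracket S r s = ∑ i, bracket S (t i) s := by
  classical
  have key : Compatible r s ↔ ∃ i, Compatible (t i) s := by
    rw [compatible_iff_exists_isLinearOrder]
    constructor
    · rintro ⟨u, hu, hru, hc⟩
      obtain ⟨i, rfl⟩ := hall u hu hru
      exact ⟨i, hc⟩
    · rintro ⟨i, hc⟩
      exact ⟨t i, (hext i).1, (hext i).2, hc⟩
  simp only [bracket]
  rw [sum_boole_eq_ite_exists hidem]
  simp only [Finset.mem_univ, true_and, key]

theorem stmt12 {X : Type*} [Finite X] {S : Type*} [CommSemiring S]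
    (hidem : (1 : S) + 1 = 1)
    (r : X → X → Prop) (hr : IsPartialOrder X r)
    {ι : Type*} [Fintype ι] (t : ι → (X → X → Prop)) (ht : Function.Injective t)
    (hext : ∀ i, IsLinearOrder X (t i) ∧ ∀ a b : X, r a b → t i a b)
    (hall : ∀ u : X → X → Prop, IsLinearOrder X u → (∀ a b : X, r a b → u a b) →
      ∃ i, u = t i)
    (s : X → X → Prop) (hs : IsPartialOrder X s) :
    bracket S r s = ∑ i, bracket S (t i) s :=
  stmt12_general hidem r t hext hall s
end

section
/- Let X be a set, let Y ⊆ X, let r be a partial order (acyclic preorder) with finite support A ⊆ X, and let s be a preorder with support A ∩ Y, extended by the identity on A \ Y to a preorder s_extended with support A. Then r ∪ s_extended is acyclic (its transitive closure is antisymmetric) if and only if (r restricted to Y) ∪ s, where r restricted to Y is r ∩ Y², is acyclic (its transitive closure is antisymmetric). -/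
/-- A relation is acyclic when its transitive closure is antisymmetric. -/
def Acyclic {X : Type*} (t : X → X → Prop) : Prop :=
  ∀ a b : X, Relation.TransGen t a b → Relation.TransGen t b a → a = b

theorem stmt19 {X : Type*} (A Y : Set X) (hA : A.Finite)
    (r s : X → X → Prop)
    -- r is a play with support A, consistent (a partial order on A)
    (hrsupp : ∀ x y : X, r x y → x ∈ A ∧ y ∈ A)
    (hrrefl : ∀ x ∈ A, r x x)
    (hrtrans : ∀ x y z : X, r x y → r y z → r x z)
    (hracyclic : ∀ x y : X, r x y → r y x → x = y)
    -- s is a play with support A ∩ Y (a preorder on A ∩ Y)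
    (hssupp : ∀ x y : X, s x y → x ∈ A ∩ Y ∧ y ∈ A ∩ Y)
    (hsrefl : ∀ x ∈ A ∩ Y, s x x)
    (hstrans : ∀ x y z : X, s x y → s y z → s x z) :
    -- r ∪ (s extended by the identity on A \ Y) is acyclic iff
    -- (r restricted to Y) ∪ s is acyclic
    Acyclic (fun u v => r u v ∨ s u v ∨ (u = v ∧ u ∈ A \ Y)) ↔
      Acyclic (fun u v => (r u v ∧ u ∈ Y ∧ v ∈ Y) ∨ s u v) := by
  set t1 : X → X → Prop := fun u v => r u v ∨ s u v ∨ (u = v ∧ u ∈ A \ Y) with ht1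
  set t2 : X → X → Prop := fun u v => (r u v ∧ u ∈ Y ∧ v ∈ Y) ∨ s u v with ht2
  set t : X → X → Prop := fun u v => r u v ∨ s u v with ht
  have ht1t : ∀ x y, t1 x y → t x y := by
    rintro x y (hr | hs | ⟨rfl, hx⟩)
    · exact Or.inl hr
    · exact Or.inr hs
    · exact Or.inl (hrrefl x hx.1)
  have ht2t1 : ∀ x y, t2 x y → t1 x y := by
    rintro x y (⟨hr, _⟩ | hs)
    · exact Or.inl hr
    · exact Or.inr (Or.inl hs)
  constructor
  · -- easy direction
    intro h a b hab hba
    exact h a b (Relation.TransGen.mono ht2t1 _ _ hab) (Relation.TransGen.mono ht2t1 _ _ hba)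
  · intro h a b hab hba
    -- key lemma: decomposition of TransGen t chains
    have key : ∀ x y, Relation.TransGen t x y →
        r x y ∨ ∃ u v, Relation.ReflGen r x u ∧ Relation.TransGen t2 u v ∧
          Relation.ReflGen r v y ∧ u ∈ Y ∧ v ∈ Y := by
      intro x y hxy
      induction hxy with
      | @single c hstep =>
        rcases hstep with hr | hs
        · exact Or.inl hr
        · obtain ⟨⟨_, hxY⟩, ⟨_, hcY⟩⟩ := hssupp _ _ hs
          exact Or.inr ⟨x, c, Relation.ReflGen.refl,
            Relation.TransGen.single (Or.inr hs), Relation.ReflGen.refl, hxY, hcY⟩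
      | @tail b c hab' hstep ih =>
        rcases hstep with hr | hs
        · rcases ih with hr' | ⟨u, v, h1, h2, h3, huY, hvY⟩
          · exact Or.inl (hrtrans _ _ _ hr' hr)
          · refine Or.inr ⟨u, v, h1, h2, ?_, huY, hvY⟩
            rcases h3 with _ | h3
            · exact Relation.ReflGen.single hr
            · exact Relation.ReflGen.single (hrtrans _ _ _ h3 hr)
        · obtain ⟨⟨_, hbY⟩, ⟨_, hcY⟩⟩ := hssupp _ _ hs
          rcases ih with hr' | ⟨u, v, h1, h2, h3, huY, hvY⟩
          · exact Or.inr ⟨b, c, Relation.ReflGen.single hr',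
              Relation.TransGen.single (Or.inr hs), Relation.ReflGen.refl, hbY, hcY⟩
          · refine Or.inr ⟨u, c, h1, ?_, Relation.ReflGen.refl, huY, hcY⟩
            have h2b : Relation.TransGen t2 u b := by
              rcases h3 with _ | h3
              · exact h2
              · exact h2.tail (Or.inl ⟨h3, hvY, hbY⟩)
            exact h2b.tail (Or.inr hs)
    -- reduce t1-chains to t-chains
    have hab' := Relation.TransGen.mono ht1t _ _ hab
    have hba' := Relation.TransGen.mono ht1t _ _ hba
    rcases key a b hab' with hr1 | ⟨u1, v1, ha1, hT1, hb1, hu1Y, hv1Y⟩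
    · rcases key b a hba' with hr2 | ⟨u2, v2, hb2, hT2, ha2, hu2Y, hv2Y⟩
      · exact hracyclic _ _ hr1 hr2
      · -- r a b, chain b → u2 → v2 → a
        -- show u2 = v2 via acyclicity of t2, then conclude
        have hv2u2 : Relation.ReflGen r v2 u2 := by
          rcases ha2 with _ | h3 <;> rcases hb2 with _ | h4
          · exact Relation.ReflGen.single hr1
          · exact Relation.ReflGen.single (hrtrans _ _ _ hr1 h4)
          · exact Relation.ReflGen.single (hrtrans _ _ _ h3 hr1)
          · exact Relation.ReflGen.single (hrtrans _ _ _ h3 (hrtrans _ _ _ hr1 h4))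
        have heq : u2 = v2 := by
          rcases hv2u2 with _ | h5
          · rfl
          · exact (h u2 v2 hT2 (Relation.TransGen.single (Or.inl ⟨h5, hv2Y, hu2Y⟩))).symm ▸
              (h u2 v2 hT2 (Relation.TransGen.single (Or.inl ⟨h5, hv2Y, hu2Y⟩)))
        subst heq
        -- now ReflGen r v2 a? no: ha2 : ReflGen r u2(=v2)... we have b →R u2, u2 →R a
        -- a = u2 = b?
        rcases ha2 with _ | h3 <;> rcases hb2 with _ | h4
        · rfl
        · -- a = u2, r b u2 : r b a, with r a b gives a = b
          exact hracyclic _ _ hr1 h4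
        · -- r u2 a, b = u2: r b a
          exact hracyclic _ _ hr1 h3
        · -- r u2 a, r b u2: r b a
          exact hracyclic _ _ hr1 (hrtrans _ _ _ h4 h3)
    · rcases key b a hba' with hr2 | ⟨u2, v2, hb2, hT2, ha2, hu2Y, hv2Y⟩
      · -- symmetric: r b a, chain a → u1 → v1 → b
        have hv1u1 : Relation.ReflGen r v1 u1 := by
          rcases hb1 with _ | h3 <;> rcases ha1 with _ | h4
          · exact Relation.ReflGen.single hr2
          · exact Relation.ReflGen.single (hrtrans _ _ _ hr2 h4)
          · exact Relation.ReflGen.single (hrtrans _ _ _ h3 hr2)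
          · exact Relation.ReflGen.single (hrtrans _ _ _ h3 (hrtrans _ _ _ hr2 h4))
        have heq : u1 = v1 := by
          rcases hv1u1 with _ | h5
          · rfl
          · exact h u1 v1 hT1 (Relation.TransGen.single (Or.inl ⟨h5, hv1Y, hu1Y⟩))
        subst heq
        rcases hb1 with _ | h3 <;> rcases ha1 with _ | h4
        · rfl
        · exact hracyclic _ _ h4 hr2
        · exact hracyclic _ _ h3 hr2
        · exact hracyclic _ _ (hrtrans _ _ _ h4 h3) hr2
      · -- both chains: a → u1 → v1 → b → u2 → v2 → a
        have hv1u2 : Relation.ReflGen r v1 u2 := by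
          rcases hb1 with _ | h3 <;> rcases hb2 with _ | h4
          · exact Relation.ReflGen.refl
          · exact Relation.ReflGen.single h4
          · exact Relation.ReflGen.single h3
          · exact Relation.ReflGen.single (hrtrans _ _ _ h3 h4)
        have hv2u1 : Relation.ReflGen r v2 u1 := by
          rcases ha2 with _ | h3 <;> rcases ha1 with _ | h4
          · exact Relation.ReflGen.refl
          · exact Relation.ReflGen.single h4
          · exact Relation.ReflGen.single h3
          · exact Relation.ReflGen.single (hrtrans _ _ _ h3 h4)
        have hT1' : Relation.TransGen t2 u1 v2 := by
          rcases hv1u2 with _ | h5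
          · exact hT1.trans hT2
          · exact (hT1.tail (Or.inl ⟨h5, hv1Y, hu2Y⟩)).trans hT2
        have hT2' : Relation.TransGen t2 u2 v1 := by
          rcases hv2u1 with _ | h5
          · exact hT2.trans hT1
          · exact (hT2.tail (Or.inl ⟨h5, hv2Y, hu1Y⟩)).trans hT1
        have he1 : u1 = v2 := by
          rcases hv2u1 with _ | h5
          · rfl
          · exact (h u1 v2 hT1' (Relation.TransGen.single (Or.inl ⟨h5, hv2Y, hu1Y⟩)))
        have he2 : u2 = v1 := by
          rcases hv1u2 with _ | h5
          · rfl
          · exact (h u2 v1 hT2' (Relation.TransGen.single (Or.inl ⟨h5, hv1Y, hu2Y⟩)))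
        subst he1; subst he2
        -- a = u1 and b = u2
        have haeq : a = u1 := by
          rcases ha1 with _ | h4 <;> rcases ha2 with _ | h3
          · rfl
          · rfl
          · rfl
          · exact hracyclic _ _ h4 h3
        have hbeq : b = u2 := by
          rcases hb2 with _ | h4 <;> rcases hb1 with _ | h3
          · rfl
          · rfl
          · rfl
          · exact hracyclic _ _ h4 h3
        rw [haeq, hbeq]
        exact h u1 u2 hT1 hT2
end
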